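/- Let s ≥ 1, let A₁,…,A_s be k₁×n₁ matrices and B₁,…,B_s be k₂×n₂ matrices over a finite field K with n_{A₁} ≥ n_{A₂} ≥ … ≥ n_{A_s}. Let M be the vertical stacking of A₁⊗B₁, …, A_s⊗B_s. Then n_M ≥ min{ n_{A₁}, n_{A₂}·n_{B₁}, n_{A₃}·n_{B₁₊₂}, …, n_{A_s}·n_{B₁₊⋯₊(s−1)}, n_{B₁₊⋯₊s} }, where B₁₊⋯₊j denotes the vertical stacking of B₁,…,B_j. -/

import Mathlib

open Kronecker

/-- `colIndepMax A` is the largest `j` (at most the number of columns) such that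
every set of `j` columns of `A` is linearly independent. -/
noncomputable def colIndepMax {K m n : Type*} [Field K] [Fintype n] (A : Matrix m n K) : ℕ :=
  sSup {j | j ≤ Fintype.card n ∧
    ∀ s : Finset n, s.card = j →
      LinearIndependent K (fun i : {x // x ∈ s} => A.transpose i.1)}

/-- vertical stacking of the first `j` matrices of the family `B`. -/
def stackFam {K : Type*} {s k₂ n₂ : ℕ} (B : Fin s → Matrix (Fin k₂) (Fin n₂) K)
    (j : ℕ) (hj : j ≤ s) : Matrix (Fin j × Fin k₂) (Fin n₂) K :=
  Matrix.of fun p c => B ⟨p.1.1, lt_of_lt_of_le p.1.2 hj⟩ p.2 c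

/-- vertical stacking of the Kronecker products `A i ⊗ B i`. -/
def kronStack {K : Type*} [Mul K] {s k₁ k₂ n₁ n₂ : ℕ}
    (A : Fin s → Matrix (Fin k₁) (Fin n₁) K) (B : Fin s → Matrix (Fin k₂) (Fin n₂) K) :
    Matrix (Fin s × (Fin k₁ × Fin k₂)) (Fin n₁ × Fin n₂) K :=
  Matrix.of fun p c => (A p.1 ⊗ₖ B p.1) p.2 c

open Matrix Finset

section helpers
variable {K m n : Type*} [Field K] [Fintype n]

private def cset (A : Matrix m n K) : Set ℕ :=
  {j | j ≤ Fintype.card n ∧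
    ∀ s : Finset n, s.card = j →
      LinearIndependent K (fun i : {x // x ∈ s} => A.transpose i.1)}

private lemma colIndepMax_eq (A : Matrix m n K) : colIndepMax A = sSup (cset A) := rfl

private lemma zero_mem_cset (A : Matrix m n K) : 0 ∈ cset A := by
  refine ⟨Nat.zero_le _, fun s hs => ?_⟩
  have : s = ∅ := Finset.card_eq_zero.mp hs
  subst this
  haveI : IsEmpty {x // x ∈ (∅ : Finset n)} := ⟨fun x => Finset.notMem_empty _ x.2⟩
  exact linearIndependent_empty_type

private lemma bdd_cset (A : Matrix m n K) : BddAbove (cset A) :=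
  ⟨Fintype.card n, fun _ hj => hj.1⟩

private lemma colIndepMax_mem (A : Matrix m n K) : colIndepMax A ∈ cset A := by
  rw [colIndepMax_eq]
  exact Nat.sSup_mem ⟨0, zero_mem_cset A⟩ (bdd_cset A)

private lemma colIndepMax_le_card (A : Matrix m n K) : colIndepMax A ≤ Fintype.card n :=
  (colIndepMax_mem A).1

private lemma colIndepMax_indep (A : Matrix m n K) (t : Finset n)
    (ht : t.card ≤ colIndepMax A) :
    LinearIndependent K (fun i : {x // x ∈ t} => A.transpose i.1) := by
  obtain ⟨hle, hind⟩ := colIndepMax_mem A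
  obtain ⟨u, htu, -, hu⟩ := Finset.exists_subsuperset_card_eq (t.subset_univ) ht
    (le_trans hle (le_of_eq Finset.card_univ.symm))
  have h := hind u hu
  have hinj : Function.Injective (fun i : {x // x ∈ t} => (⟨i.1, htu i.2⟩ : {x // x ∈ u})) :=
    fun a b hab => by have h' := congrArg Subtype.val hab; exact Subtype.ext h'
  exact h.comp (fun i : {x // x ∈ t} => (⟨i.1, htu i.2⟩ : {x // x ∈ u})) hinj

private lemma eq_zero_of_mulVec_eq_zero (A : Matrix m n K) (lam : n → K) (t : Finset n)
    (hsupp : ∀ c, lam c ≠ 0 → c ∈ t) (ht : t.card ≤ colIndepMax A)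
    (h0 : A *ᵥ lam = 0) : lam = 0 := by
  have hind := colIndepMax_indep A t ht
  rw [Fintype.linearIndependent_iff] at hind
  have key := hind (fun i => lam i.1) ?_
  · funext c
    by_cases hc : c ∈ t
    · exact key ⟨c, hc⟩
    · by_contra h; exact hc (hsupp c h)
  · funext r
    have h1 : ∑ c ∈ t, lam c * A r c = ∑ c, lam c * A r c := by
      refine Finset.sum_subset t.subset_univ (fun c _ hc => ?_)
      rcases eq_or_ne (lam c) 0 with h | h
      · simp [h]
      · exact absurd (hsupp c h) hc
    have h2 : (A *ᵥ lam) r = 0 := congrFun h0 r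
    simp only [mulVec, dotProduct] at h2
    calc (∑ i : {x // x ∈ t}, lam i.1 • A.transpose i.1) r
        = ∑ i : {x // x ∈ t}, lam i.1 * A r i.1 := by
          simp [Finset.sum_apply, Matrix.transpose_apply]
      _ = ∑ c ∈ t, lam c * A r c := Finset.sum_coe_sort t (fun c => lam c * A r c)
      _ = ∑ c, A r c * lam c := by rw [h1]; exact Finset.sum_congr rfl fun c _ => mul_comm _ _
      _ = 0 := h2

private lemma le_colIndepMax (A : Matrix m n K) (j : ℕ) (hj : j ≤ Fintype.card n)
    (h : ∀ lam : n → K, ∀ t : Finset n, (∀ c, lam c ≠ 0 → c ∈ t) → t.card ≤ j →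
      A *ᵥ lam = 0 → lam = 0) : j ≤ colIndepMax A := by
  classical
  rw [colIndepMax_eq]
  refine le_csSup (bdd_cset A) ⟨hj, fun t ht => ?_⟩
  rw [Fintype.linearIndependent_iff]
  intro g hg i
  set lam : n → K := fun c => if hc : c ∈ t then g ⟨c, hc⟩ else 0 with hlam
  have hz : lam = 0 := by
    refine h lam t (fun c hc => ?_) ht.le ?_
    · by_contra hct; exact hc (by simp [hlam, hct])
    · funext r
      have hh : (A *ᵥ lam) r = ∑ c ∈ t, A r c * lam c := by
        simp only [mulVec, dotProduct]
        refine (Finset.sum_subset t.subset_univ (fun c _ hc => ?_)).symm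
        simp [hlam, hc]
      rw [Pi.zero_apply, hh]
      have hg' := congrFun hg r
      simp only [Finset.sum_apply, Pi.smul_apply, smul_eq_mul, Matrix.transpose_apply,
        Pi.zero_apply] at hg'
      rw [← Finset.sum_coe_sort t (fun c => A r c * lam c), ← hg']
      refine Finset.sum_congr rfl fun c _ => ?_
      simp [hlam, c.2, mul_comm]
  have := congrFun hz i.1
  simpa [hlam, i.2] using this

end helpers

theorem stmt3 {K : Type*} [Field K] {k₁ k₂ n₁ n₂ : ℕ} {s : ℕ} (hs : 0 < s)
    (A : Fin s → Matrix (Fin k₁) (Fin n₁) K) (B : Fin s → Matrix (Fin k₂) (Fin n₂) K)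
    (hmono : ∀ i j : Fin s, i ≤ j → colIndepMax (A j) ≤ colIndepMax (A i)) :
    Finset.univ.inf' Finset.univ_nonempty (fun i : Fin (s + 1) =>
        if h0 : (i : ℕ) = 0 then colIndepMax (A ⟨0, hs⟩)
        else if hss : (i : ℕ) = s then colIndepMax (stackFam B s le_rfl)
        else colIndepMax (A ⟨(i : ℕ), lt_of_le_of_ne (Nat.lt_succ_iff.mp i.2) hss⟩) *
          colIndepMax (stackFam B (i : ℕ) (Nat.lt_succ_iff.mp i.2)))
      ≤ colIndepMax (kronStack A B) := by
  classical
  set m := Finset.univ.inf' Finset.univ_nonempty (fun i : Fin (s + 1) =>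
      if h0 : (i : ℕ) = 0 then colIndepMax (A ⟨0, hs⟩)
      else if hss : (i : ℕ) = s then colIndepMax (stackFam B s le_rfl)
      else colIndepMax (A ⟨(i : ℕ), lt_of_le_of_ne (Nat.lt_succ_iff.mp i.2) hss⟩) *
        colIndepMax (stackFam B (i : ℕ) (Nat.lt_succ_iff.mp i.2))) with hm
  have key : ∀ b : Fin (s + 1), m ≤ (if h0 : (b : ℕ) = 0 then colIndepMax (A ⟨0, hs⟩)
      else if hss : (b : ℕ) = s then colIndepMax (stackFam B s le_rfl)
      else colIndepMax (A ⟨(b : ℕ), lt_of_le_of_ne (Nat.lt_succ_iff.mp b.2) hss⟩) *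
        colIndepMax (stackFam B (b : ℕ) (Nat.lt_succ_iff.mp b.2))) := by
    intro b
    rw [hm]
    exact Finset.inf'_le _ (Finset.mem_univ b)
  have hm0 : m ≤ colIndepMax (A ⟨0, hs⟩) := by simpa using key 0
  have hms : m ≤ colIndepMax (stackFam B s le_rfl) := by
    have h := key (Fin.last s)
    split_ifs at h with h1 h2
    · exact absurd h1 hs.ne'
    · exact h
    · exact absurd rfl h2
  have hmid : ∀ (j : ℕ) (hj0 : j ≠ 0) (hjs : j < s),
      m ≤ colIndepMax (A ⟨j, hjs⟩) * colIndepMax (stackFam B j hjs.le) := by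
    intro j hj0 hjs
    have h := key ⟨j, hjs.trans (Nat.lt_succ_self s)⟩
    split_ifs at h with h1 h2
    · exact absurd h1 hj0
    · exact absurd h2 hjs.ne
    · exact h
  refine le_colIndepMax _ m ?_ ?_
  · have h1 : m ≤ n₁ := hm0.trans ((colIndepMax_le_card _).trans (le_of_eq (Fintype.card_fin _)))
    have h2 : m ≤ n₂ := hms.trans ((colIndepMax_le_card _).trans (le_of_eq (Fintype.card_fin _)))
    rw [Fintype.card_prod, Fintype.card_fin, Fintype.card_fin]
    rcases Nat.eq_zero_or_pos n₂ with h | h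
    · omega
    · exact h1.trans (Nat.le_mul_of_pos_right _ h)
  intro lam t hsuppt htcard hmv
  by_contra hne
  set μ : Fin n₁ → Fin n₂ → K := fun c₁ c₂ => lam (c₁, c₂) with hμ
  set T : Finset (Fin n₁) := Finset.univ.filter (fun c₁ => μ c₁ ≠ 0) with hT
  set D : Fin n₁ → Finset (Fin n₂) :=
    fun c₁ => Finset.univ.filter (fun c₂ => lam (c₁, c₂) ≠ 0) with hD
  set S : Finset (Fin n₁ × Fin n₂) := Finset.univ.filter (fun p => lam p ≠ 0) with hS
  have hST : ∀ p ∈ S, p.1 ∈ T := by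
    intro p hp
    simp only [hS, Finset.mem_filter, Finset.mem_univ, true_and] at hp
    simp only [hT, Finset.mem_filter, Finset.mem_univ, true_and]
    intro h
    exact hp (congrFun h p.2)
  have hScard : S.card = ∑ c₁ ∈ T, (D c₁).card := by
    rw [Finset.card_eq_sum_card_fiberwise hST]
    refine Finset.sum_congr rfl fun c₁ _ => ?_
    refine Finset.card_bij (fun p _ => p.2) ?_ ?_ ?_
    · rintro ⟨a, b⟩ hp
      simp only [hS, Finset.mem_filter, Finset.mem_univ, true_and] at hp
      obtain ⟨h1, h2⟩ := hp
      subst h2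
      simp only [hD, Finset.mem_filter, Finset.mem_univ, true_and]
      exact h1
    · rintro ⟨a, b⟩ ha ⟨c, d⟩ hc h
      simp only [Finset.mem_filter] at ha hc
      simp only at h
      subst h
      exact Prod.ext (ha.2.trans hc.2.symm) rfl
    · intro b hb
      simp only [hD, Finset.mem_filter, Finset.mem_univ, true_and] at hb
      refine ⟨(c₁, b), ?_, rfl⟩
      simp only [hS, Finset.mem_filter, Finset.mem_univ, true_and]
      exact ⟨hb, trivial⟩
  have hSm : S.card ≤ m :=
    le_trans (Finset.card_le_card (fun p hp => hsuppt p
      (by simpa [hS] using hp))) htcard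
  have hDpos : ∀ c₁ ∈ T, 1 ≤ (D c₁).card := by
    intro c₁ hc₁
    rw [Nat.one_le_iff_ne_zero, ← Nat.pos_iff_ne_zero, Finset.card_pos]
    simp only [hT, Finset.mem_filter, Finset.mem_univ, true_and] at hc₁
    obtain ⟨c₂, hc₂⟩ := Function.ne_iff.mp hc₁
    exact ⟨c₂, by simp only [hD, Finset.mem_filter, Finset.mem_univ, true_and]; exact hc₂⟩
  have hTS : T.card ≤ S.card := by
    rw [hScard]
    calc T.card = ∑ _c₁ ∈ T, 1 := by simp
      _ ≤ ∑ c₁ ∈ T, (D c₁).card := Finset.sum_le_sum hDpos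
  have hB : ∀ i : Fin s, T.card ≤ colIndepMax (A i) → ∀ c₁ r₂, (B i *ᵥ μ c₁) r₂ = 0 := by
    intro i hi c₁ r₂
    have hkey : (fun c₁ => (B i *ᵥ μ c₁) r₂) = 0 := by
      refine eq_zero_of_mulVec_eq_zero (A i) (fun c₁ => (B i *ᵥ μ c₁) r₂) T ?_ hi ?_
      · intro c₁ hc
        simp only [hT, Finset.mem_filter, Finset.mem_univ, true_and]
        intro h
        exact hc (show (B i *ᵥ μ c₁) r₂ = 0 by rw [h]; simp)
      · funext r₁
        have h := congrFun hmv (i, (r₁, r₂))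
        simp only [kronStack, mulVec, dotProduct, Matrix.of_apply, Matrix.kroneckerMap_apply,
          Pi.zero_apply] at h ⊢
        rw [Fintype.sum_prod_type] at h
        rw [← h]
        refine Finset.sum_congr rfl fun c₁ _ => ?_
        rw [Finset.mul_sum]
        refine Finset.sum_congr rfl fun c₂ _ => by ring
    exact congrFun hkey c₁
  have hstack : ∀ (j : ℕ) (hj : j ≤ s),
      (∀ i : Fin s, (i : ℕ) < j → ∀ c₁ r₂, (B i *ᵥ μ c₁) r₂ = 0) →
      ∀ c₁, stackFam B j hj *ᵥ μ c₁ = 0 := by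
    intro j hj h c₁
    funext p
    obtain ⟨q, r₂⟩ := p
    have hh := h ⟨q.1, lt_of_lt_of_le q.2 hj⟩ q.2 c₁ r₂
    simpa [stackFam, mulVec, dotProduct] using hh
  have hfinish : ∀ (j : ℕ) (hj : j ≤ s) (c₁ : Fin n₁), c₁ ∈ T →
      (D c₁).card ≤ colIndepMax (stackFam B j hj) →
      stackFam B j hj *ᵥ μ c₁ = 0 → False := by
    intro j hj c₁ hc₁T hcard hmv0
    have hz : μ c₁ = 0 := by
      refine eq_zero_of_mulVec_eq_zero _ (μ c₁) (D c₁) ?_ hcard hmv0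
      intro c₂ hc₂
      simp only [hD, Finset.mem_filter, Finset.mem_univ, true_and]
      exact hc₂
    simp only [hT, Finset.mem_filter, Finset.mem_univ, true_and] at hc₁T
    exact hc₁T hz
  have hTne : T.Nonempty := by
    obtain ⟨p, hp⟩ := Function.ne_iff.mp hne
    exact ⟨p.1, hST p (by simp only [hS, Finset.mem_filter, Finset.mem_univ, true_and]; exact hp)⟩
  by_cases hall : ∀ i : Fin s, T.card ≤ colIndepMax (A i)
  · obtain ⟨c₁, hc₁⟩ := hTne
    refine hfinish s le_rfl c₁ hc₁ ?_ ?_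
    · calc (D c₁).card ≤ ∑ c ∈ T, (D c).card :=
          Finset.single_le_sum (f := fun c => (D c).card) (fun c _ => Nat.zero_le _) hc₁
        _ = S.card := hScard.symm
        _ ≤ m := hSm
        _ ≤ _ := hms
    · exact hstack s le_rfl (fun i _ => hB i (hall i)) c₁
  · push_neg at hall
    set Bad : Finset (Fin s) := Finset.univ.filter (fun i => colIndepMax (A i) < T.card)
      with hBad
    have hBadne : Bad.Nonempty := by
      obtain ⟨i, hi⟩ := hall
      exact ⟨i, by simp only [hBad, Finset.mem_filter, Finset.mem_univ, true_and]; omega⟩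
    set i₀ := Bad.min' hBadne with hi₀
    have hi₀Bad : i₀ ∈ Bad := Bad.min'_mem hBadne
    have hi₀lt : colIndepMax (A i₀) < T.card := by
      simpa only [hBad, Finset.mem_filter, Finset.mem_univ, true_and] using hi₀Bad
    have hPbelow : ∀ i : Fin s, (i : ℕ) < (i₀ : ℕ) → T.card ≤ colIndepMax (A i) := by
      intro i hi
      by_contra hcon
      have hle : i₀ ≤ i := Bad.min'_le i
        (by simp only [hBad, Finset.mem_filter, Finset.mem_univ, true_and]; omega)
      have := Fin.le_def.mp hle
      omega
    have hj0 : (i₀ : ℕ) ≠ 0 := by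
      intro h
      have h1 : T.card ≤ colIndepMax (A ⟨0, hs⟩) := le_trans (hTS.trans hSm) hm0
      have he : i₀ = ⟨0, hs⟩ := Fin.ext h
      rw [he] at hi₀lt
      omega
    have hjs' : (i₀ : ℕ) < s := i₀.2
    have hmidj := hmid (i₀ : ℕ) hj0 hjs'
    rw [Fin.eta] at hmidj
    have hpig : ∃ c₁ ∈ T, (D c₁).card ≤ colIndepMax (stackFam B (i₀ : ℕ) hjs'.le) := by
      by_contra hcon
      push_neg at hcon
      set nB := colIndepMax (stackFam B (i₀ : ℕ) hjs'.le) with hnB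
      set nA := colIndepMax (A i₀) with hnA
      have h1 : T.card * (nB + 1) ≤ ∑ c ∈ T, (D c).card := by
        calc T.card * (nB + 1) = ∑ _c ∈ T, (nB + 1) := by
              rw [Finset.sum_const, smul_eq_mul]
          _ ≤ ∑ c ∈ T, (D c).card := Finset.sum_le_sum (fun c hc => hcon c hc)
      have h2 : (nA + 1) * (nB + 1) ≤ T.card * (nB + 1) :=
        Nat.mul_le_mul_right _ (by omega)
      have h3 : ∑ c ∈ T, (D c).card ≤ nA * nB := by
        rw [← hScard]; exact hSm.trans hmidj
      nlinarith
    obtain ⟨c₁, hc₁T, hc₁D⟩ := hpig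
    refine hfinish (i₀ : ℕ) hjs'.le c₁ hc₁T hc₁D ?_
    exact hstack _ _ (fun i hi => hB i (hPbelow i hi)) c₁
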